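/- Let n ≥ 2, let r = [r_1, …, r_{2n−2}] be a tree-like factorization of λ_n, and let k ∈ {1, …, n−1}. Say that r_ℓ increases k if r_ℓ r_{ℓ+1} ⋯ r_{2n−2}(k) > r_{ℓ+1} ⋯ r_{2n−2}(k). Then there are exactly two indices ℓ ∈ {1, …, 2n−2} such that r_ℓ increases k. -/

import Mathlib

/-- The affine reflection `((i,j))` of the affine symmetric group `W̃ₙ`, as a function
`ℤ → ℤ`: it interchanges `i + k*n` and `j + k*n` for every `k ∈ ℤ` and fixes all
integers not congruent to `i` or `j` mod `n`. -/
def affRefl (n : ℕ) (i j : ℤ) : ℤ → ℤ := fun k =>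
  if (k - i) % (n : ℤ) = 0 then k - i + j
  else if (k - j) % (n : ℤ) = 0 then k - j + i
  else k

/-- `t : ℤ → ℤ` is an affine reflection of `W̃ₙ`. -/
def IsAffRefl (n : ℕ) (t : ℤ → ℤ) : Prop :=
  ∃ i j : ℤ, (i - j) % (n : ℤ) ≠ 0 ∧ t = affRefl n i j

/-- The simple reflection `sⱼ = ((j, j+1))`. -/
def simpleRefl (n : ℕ) (j : ℤ) : ℤ → ℤ := affRefl n j (j + 1)

/-- The translation `λₙ`: it sends `k ≡ 0 (mod n)` to `k - n(n-1)` and all other `k`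
to `k + n`. -/
def lam (n : ℕ) : ℤ → ℤ := fun k =>
  if k % (n : ℤ) = 0 then k - (n : ℤ) * ((n : ℤ) - 1) else k + (n : ℤ)

/-- The product `r₁ r₂ ⋯ rₘ` of a list of elements, with `(w·v)(k) = w(v(k))`. -/
def listProd (l : List (ℤ → ℤ)) : ℤ → ℤ := l.foldr (· ∘ ·) id

/-- `l` is a factorization of `λₙ` into affine reflections. -/
def IsFactorization (n : ℕ) (l : List (ℤ → ℤ)) : Prop :=
  (∀ t ∈ l, IsAffRefl n t) ∧ listProd l = lam n

/-- A tree-like factorization of `λₙ`: a factorization `[r₁, …, r_{2n-2}]` into `2n-2`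
affine reflections such that there are integers `a₀, …, a_{2n-2}` and `b₁, …, b_{2n-2}`
with `r_k = ((a_{k-1}, b_k))`, `a_{k-1} < b_k` and `a_k ≡ b_k (mod n)`
(0-based: `r` at index `k` equals `((a k, b (k+1)))`). -/
def IsTreeLike (n : ℕ) (l : List (ℤ → ℤ)) : Prop :=
  IsFactorization n l ∧ l.length = 2 * n - 2 ∧
  ∃ a b : ℕ → ℤ, ∀ k : ℕ, ∀ h : k < l.length,
    l.get ⟨k, h⟩ = affRefl n (a k) (b (k + 1)) ∧
    a k < b (k + 1) ∧ (a (k + 1) - b (k + 1)) % (n : ℤ) = 0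

/-- `a₀ < a₁ < ⋯` is a strictly increasing endpoint sequence of the factorization `l`:
`r_ℓ = ((a_{ℓ-1}, a_ℓ))` (0-based: `r` at index `k` is `((a k, a (k+1)))`). -/
def EndSeq (n : ℕ) (l : List (ℤ → ℤ)) (a : ℕ → ℤ) : Prop :=
  ∀ k : ℕ, ∀ h : k < l.length,
    a k < a (k + 1) ∧ l.get ⟨k, h⟩ = affRefl n (a k) (a (k + 1))

/-- The representative of `x` modulo `n` lying in `{1, …, n}`. -/
def resOne (n : ℕ) (x : ℤ) : ℤ := if x % (n : ℤ) = 0 then (n : ℤ) else x % (n : ℤ)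

/-- `nb_k(r)` for the endpoint sequence `a` of a tree-like factorization of `λₙ`:
the list of the residues `a_i mod n` (representatives in `{1, …, n}`), in increasing
order of the index `i ∈ {1, …, 2n-2}`, over those `i` with `a_{i-1} ≡ k (mod n)`
(0-based: indices `i < 2n-2` with `a i ≡ k`, recording the residue of `a (i+1)`). -/
def nb (n : ℕ) (a : ℕ → ℤ) (k : ℤ) : List ℤ :=
  ((List.range (2 * n - 2)).filter (fun i => decide ((a i - k) % (n : ℤ) = 0))).map
    (fun i => resOne n (a (i + 1)))

/-- A cyclic factorization of `λₙ`: a tree-like factorization such that, for an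
endpoint sequence `a` as above, (i) `nb_n` is strictly increasing; and (ii) for each
`k ∈ {1, …, n-1}`, writing `nb_k = [c₁, …, c_ℓ]`, there is `j ∈ {1, …, ℓ}` with
`c_j < c_{j+1} < ⋯ < c_{ℓ-1} < k < c₁ < ⋯ < c_{j-1}`. -/
def IsCyclicFact (n : ℕ) (l : List (ℤ → ℤ)) : Prop :=
  IsTreeLike n l ∧
  ∃ a : ℕ → ℤ, EndSeq n l a ∧
    List.Chain' (· < ·) (nb n a (n : ℤ)) ∧
    (∀ k : ℤ, 1 ≤ k → k ≤ (n : ℤ) - 1 →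
      ∃ m : ℕ, m < (nb n a k).length ∧
        List.Chain' (· < ·)
          ((nb n a k).dropLast.drop m ++ k :: (nb n a k).dropLast.take m))

/-- The letter at (0-based) position `j` of the subword of `λ̂ₙ` with skip set `S`:
the identity `e` if `j` is a skip, and the simple reflection `sⱼ` otherwise. -/
def letterAt (n : ℕ) (S : Finset ℕ) (j : ℕ) : ℤ → ℤ :=
  if j ∈ S then id else simpleRefl n (j : ℤ)

/-- The subword of the word `λ̂ₙ = [s₀, s₁, …, s_{n-1}]^{n-1}` (of length `N = n(n-1)`,
whose letter at 0-based position `j` is `s_j`) with skip set `S`. -/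
def subword (n : ℕ) (S : Finset ℕ) : List (ℤ → ℤ) :=
  (List.range (n * (n - 1))).map (letterAt n S)

/-- `u_{(j)}`: the product of the first `j` letters of the subword. -/
def uPref (n : ℕ) (S : Finset ℕ) (j : ℕ) : ℤ → ℤ :=
  listProd ((subword n S).take j)

/-- `u_{(j)}⁻¹`: since every letter is an involution, the inverse of `u_{(j)}` is the
product of the first `j` letters in reverse order. -/
def uPrefInv (n : ℕ) (S : Finset ℕ) (j : ℕ) : ℤ → ℤ :=
  listProd (((subword n S).take j).reverse)

/-- The element `t_{j+1} = u_{(j)} s_j u_{(j)}⁻¹` of `inv(u)` (0-based `j`). -/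
def conjAt (n : ℕ) (S : Finset ℕ) (j : ℕ) : ℤ → ℤ :=
  uPref n S j ∘ simpleRefl n (j : ℤ) ∘ uPrefInv n S j

/-- The (0-based) skip indices of the subword, in increasing order. -/
def skipIdx (S : Finset ℕ) : List ℕ := S.sort (· ≤ ·)

/-- The sequence `r^u` of skip reflections of the subword with skip set `S`. -/
def skipRefls (n : ℕ) (S : Finset ℕ) : List (ℤ → ℤ) :=
  (skipIdx S).map (conjAt n S)

/-- The subword with skip set `S` is a member of `S_n`: it is a subword of `λ̂ₙ`
with exactly `2n-2` skips whose product is the identity. -/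
def SnMem (n : ℕ) (S : Finset ℕ) : Prop :=
  S ⊆ Finset.range (n * (n - 1)) ∧ S.card = 2 * n - 2 ∧ listProd (subword n S) = id

/-- The product of the suffix `r_{i+1} ⋯ r_m` (0-based: drops the first `i` factors). -/
def suffixProd (l : List (ℤ → ℤ)) (i : ℕ) : ℤ → ℤ := listProd (l.drop i)

/-- The cyclic segment product `u_{a+1} u_{a+2} ⋯ u_{a+L}` of the subword with skip set
`S` (0-based starting position `a`, indices taken modulo `N = n(n-1)`). -/
def segProd (n : ℕ) (S : Finset ℕ) (a L : ℕ) : ℤ → ℤ :=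
  listProd ((List.range L).map (fun t => letterAt n S ((a + t) % (n * (n - 1)))))

lemma emod_zero_iff (n : ℕ) (a : ℤ) : a % (n:ℤ) = 0 ↔ (n:ℤ) ∣ a :=
  Int.dvd_iff_emod_eq_zero.symm

lemma affRefl_shift (n : ℕ) (i j t : ℤ) : affRefl n (i + t*n) (j + t*n) = affRefl n i j := by
  funext x
  unfold affRefl
  have h1 : (x - (i + t*n)) % (n:ℤ) = (x - i) % n := by
    have e : x - (i + t*n) = (x - i) + (-t)*n := by ring
    rw [e, Int.add_mul_emod_self_right]
  have h2 : (x - (j + t*n)) % (n:ℤ) = (x - j) % n := by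
    have e : x - (j + t*n) = (x - j) + (-t)*n := by ring
    rw [e, Int.add_mul_emod_self_right]
  rw [h1, h2]
  split_ifs <;> ring

lemma affRefl_fst {n : ℕ} {p x : ℤ} (q : ℤ) (h : (x - p) % (n:ℤ) = 0) :
    affRefl n p q x = x - p + q := by unfold affRefl; rw [if_pos h]

lemma affRefl_snd {n : ℕ} {p q x : ℤ} (h1 : (x - p) % (n:ℤ) ≠ 0) (h2 : (x - q) % (n:ℤ) = 0) :
    affRefl n p q x = x - q + p := by unfold affRefl; rw [if_neg h1, if_pos h2]

lemma affRefl_none {n : ℕ} {p q x : ℤ} (h1 : (x - p) % (n:ℤ) ≠ 0) (h2 : (x - q) % (n:ℤ) ≠ 0) :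
    affRefl n p q x = x := by unfold affRefl; rw [if_neg h1, if_neg h2]

lemma affRefl_invol {n : ℕ} {p q : ℤ} (h : (p - q) % (n:ℤ) ≠ 0) (x : ℤ) :
    affRefl n p q (affRefl n p q x) = x := by
  have hd : ¬ (n:ℤ) ∣ (p - q) := fun hc => h ((emod_zero_iff n _).mpr hc)
  by_cases h1 : (x - p) % (n:ℤ) = 0
  · rw [affRefl_fst q h1]
    rw [emod_zero_iff] at h1
    have h2 : (x - p + q - p) % (n:ℤ) ≠ 0 := by
      intro hc
      rw [emod_zero_iff] at hc
      apply hd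
      have : p - q = -((x - p + q - p) - (x - p)) := by ring
      rw [this]
      exact dvd_neg.mpr (dvd_sub hc h1)
    have h3 : (x - p + q - q) % (n:ℤ) = 0 := by
      have e : x - p + q - q = x - p := by ring
      rw [e, emod_zero_iff]; exact h1
    rw [affRefl_snd h2 h3]; ring
  · by_cases h2 : (x - q) % (n:ℤ) = 0
    · rw [affRefl_snd h1 h2]
      have h3 : (x - q + p - p) % (n:ℤ) = 0 := by
        have e : x - q + p - p = x - q := by ring
        rw [e]; exact h2
      rw [affRefl_fst q h3]; ring
    · rw [affRefl_none h1 h2, affRefl_none h1 h2]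

lemma affRefl_pres {n : ℕ} (p q : ℤ) {y z : ℤ} (h : (n:ℤ) ∣ (y - z)) :
    (n:ℤ) ∣ (affRefl n p q y - affRefl n p q z) := by
  have key : ∀ c : ℤ, (y - c) % (n:ℤ) = 0 ↔ (z - c) % (n:ℤ) = 0 := by
    intro c
    rw [emod_zero_iff, emod_zero_iff]
    constructor
    · intro hy
      have e : z - c = (y - c) - (y - z) := by ring
      rw [e]; exact dvd_sub hy h
    · intro hz
      have e : y - c = (z - c) + (y - z) := by ring
      rw [e]; exact dvd_add hz h
  by_cases h1 : (y - p) % (n:ℤ) = 0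
  · rw [affRefl_fst q h1, affRefl_fst q ((key p).mp h1)]
    have e : y - p + q - (z - p + q) = y - z := by ring
    rw [e]; exact h
  · have h1' : (z - p) % (n:ℤ) ≠ 0 := fun hc => h1 ((key p).mpr hc)
    by_cases h2 : (y - q) % (n:ℤ) = 0
    · rw [affRefl_snd h1 h2, affRefl_snd h1' ((key q).mp h2)]
      have e : y - q + p - (z - q + p) = y - z := by ring
      rw [e]; exact h
    · have h2' : (z - q) % (n:ℤ) ≠ 0 := fun hc => h2 ((key q).mpr hc)
      rw [affRefl_none h1 h2, affRefl_none h1' h2']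
      exact h

lemma listProd_cons (t : ℤ → ℤ) (L : List (ℤ → ℤ)) : listProd (t :: L) = t ∘ listProd L := rfl

lemma foldr_comp (L : List (ℤ → ℤ)) (g : ℤ → ℤ) : L.foldr (· ∘ ·) g = listProd L ∘ g := by
  induction L with
  | nil => rfl
  | cons t L ih =>
    show t ∘ (L.foldr (· ∘ ·) g) = _
    rw [ih]; rfl

lemma listProd_append (L M : List (ℤ → ℤ)) : listProd (L ++ M) = listProd L ∘ listProd M := by
  unfold listProd
  rw [List.foldr_append]
  exact foldr_comp L _

lemma listProd_pres {n : ℕ} {L : List (ℤ → ℤ)} (h : ∀ t ∈ L, IsAffRefl n t) {y z : ℤ}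
    (hyz : (n:ℤ) ∣ (y - z)) : (n:ℤ) ∣ (listProd L y - listProd L z) := by
  induction L with
  | nil => exact hyz
  | cons t L ih =>
    obtain ⟨p, q, hpq, rfl⟩ := h t List.mem_cons_self
    exact affRefl_pres p q (ih (fun t ht => h t (List.mem_cons_of_mem _ ht)) )

lemma listProd_reverse_inv {n : ℕ} {L : List (ℤ → ℤ)} (h : ∀ t ∈ L, IsAffRefl n t) (x : ℤ) :
    listProd L.reverse (listProd L x) = x := by
  induction L with
  | nil => rfl
  | cons t L ih =>
    obtain ⟨p, q, hpq, heq⟩ := h t List.mem_cons_self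
    subst heq
    rw [List.reverse_cons, listProd_append]
    show listProd L.reverse (affRefl n p q (affRefl n p q (listProd L x))) = x
    rw [affRefl_invol hpq]
    exact ih (fun t ht => h t (List.mem_cons_of_mem _ ht))

lemma listProd_inv_reverse {n : ℕ} {L : List (ℤ → ℤ)} (h : ∀ t ∈ L, IsAffRefl n t) (x : ℤ) :
    listProd L (listProd L.reverse x) = x := by
  have := listProd_reverse_inv (L := L.reverse)
    (fun t ht => h t (List.mem_reverse.mp ht)) x
  rwa [List.reverse_reverse] at this

lemma suffixProd_eq (l : List (ℤ → ℤ)) (i : ℕ) (h : i < l.length) :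
    suffixProd l i = l.get ⟨i, h⟩ ∘ suffixProd l (i+1) := by
  unfold suffixProd
  rw [List.drop_eq_getElem_cons h]
  rfl

lemma suffixProd_len (l : List (ℤ → ℤ)) : suffixProd l l.length = id := by
  unfold suffixProd
  rw [List.drop_length]
  rfl


/-- In a tree-like factorization of `λₙ`, for each `k ∈ {1, …, n-1}`
there are exactly two indices `ℓ` such that `r_ℓ` increases `k`, i.e. such that
`r_ℓ r_{ℓ+1} ⋯ r_{2n-2}(k) > r_{ℓ+1} ⋯ r_{2n-2}(k)`. -/
theorem stmt4 (n : ℕ) (hn : 2 ≤ n) (l : List (ℤ → ℤ)) (h : IsTreeLike n l)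
    (k : ℤ) (hk1 : 1 ≤ k) (hk2 : k ≤ (n : ℤ) - 1) :
    ((Finset.range l.length).filter
      (fun i => suffixProd l (i + 1) k < suffixProd l i k)).card = 2 := by
  classical
  obtain ⟨⟨hrefl, hprod⟩, hlen, a, b, hab⟩ := h
  set m := l.length with hmdef
  have hm : m = 2*n - 2 := hlen
  have hm2 : 2 ≤ m := by omega
  have hn0 : 0 < (n:ℤ) := by exact_mod_cast (by omega : 0 < n)
  -- the endpoint sequence
  set g : ℕ → ℤ := fun i => if i < m then b (i+1) - a i else 1 with hg
  set A : ℕ → ℤ := fun i => a 0 + ∑ j ∈ Finset.range i, g j with hA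
  have hAsucc : ∀ i, A (i+1) = A i + g i := by
    intro i
    simp only [hA, Finset.sum_range_succ]
    ring
  have hgpos : ∀ i, 0 < g i := by
    intro i
    simp only [hg]
    split_ifs with hi
    · exact sub_pos.mpr (hab i hi).2.1
    · norm_num
  have hAlt : ∀ i, A i < A (i+1) := by
    intro i
    have := hgpos i
    rw [hAsucc]
    linarith
  have hAmono : ∀ i j : ℕ, i ≤ j → A i ≤ A j :=
    fun i j hij => (strictMono_nat_of_lt_succ hAlt).monotone hij
  have hAa : ∀ i, i ≤ m → (n:ℤ) ∣ (A i - a i) := by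
    intro i
    induction i with
    | zero => intro _; simp [hA]
    | succ i ih =>
      intro hi
      have hi' : i < m := by omega
      have h1 := ih (by omega)
      have h2 : (n:ℤ) ∣ (a (i+1) - b (i+1)) := by
        rw [← emod_zero_iff]
        exact (hab i hi').2.2
      have e : A (i+1) - a (i+1) = (A i - a i) - (a (i+1) - b (i+1)) := by
        rw [hAsucc]
        simp only [hg, if_pos hi']
        ring
      rw [e]
      exact dvd_sub h1 h2
  have hget : ∀ i, ∀ hi : i < m, l.get ⟨i, hi⟩ = affRefl n (A i) (A (i+1)) := by
    intro i hi
    obtain ⟨c, hc⟩ := hAa i (by omega)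
    have h1 : A i = a i + c * n := by linarith [hc]
    have h2 : A (i+1) = b (i+1) + c * n := by
      rw [hAsucc]
      simp only [hg, if_pos hi]
      linarith [hc]
    rw [(hab i hi).1, ← affRefl_shift n (a i) (b (i+1)) c, ← h1, ← h2]
  have hgap : ∀ i, i < m → ¬ (n:ℤ) ∣ (A (i+1) - A i) := by
    intro i hi hdvd
    obtain ⟨p, q, hpq, heq⟩ := hrefl _ (by simp [List.getElem_mem] : l.get ⟨i, hi⟩ ∈ l)
    have h2 : affRefl n (A i) (A (i+1)) (affRefl n (A i) (A (i+1)) (A i)) = A i := by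
      rw [← hget i hi, heq]
      exact affRefl_invol hpq _
    have e1 : affRefl n (A i) (A (i+1)) (A i) = A (i+1) := by
      rw [affRefl_fst (A (i+1)) (by simp)]
      ring
    have e2 : affRefl n (A i) (A (i+1)) (A (i+1)) = A (i+1) - A i + A (i+1) := by
      rw [affRefl_fst (A (i+1)) ((emod_zero_iff n _).mpr hdvd)]
    rw [e1, e2] at h2
    have := hAlt i
    linarith
  have heval2 : ∀ i, i < m → affRefl n (A i) (A (i+1)) (A (i+1)) = A i := by
    intro i hi
    have h1 : (A (i+1) - A i) % (n:ℤ) ≠ 0 := fun hc => hgap i hi ((emod_zero_iff n _).mp hc)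
    rw [affRefl_snd h1 (by simp)]
    ring
  -- the zero-class trajectory
  have hzero : ∀ j i : ℕ, i + j = m → suffixProd l i (A m) = A i := by
    intro j
    induction j with
    | zero =>
      intro i hi
      have : i = m := by omega
      subst this
      rw [hmdef, suffixProd_len]
      rfl
    | succ j ih =>
      intro i hi
      have hi' : i < m := by omega
      rw [suffixProd_eq l i hi', hget i hi']
      have hrec := ih (i+1) (by omega)
      simp only [Function.comp_apply]
      rw [hrec, heval2 i hi']
  have hAm : (n:ℤ) ∣ A m := by
    by_contra hc
    have h0 : suffixProd l 0 = lam n := by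
      unfold suffixProd
      rw [List.drop_zero]
      exact hprod
    have h1 : lam n (A m) = A 0 := by
      rw [← h0]
      exact hzero m 0 (by omega)
    have h2 : lam n (A m) = A m + n := by
      unfold lam
      rw [if_neg (fun hh => hc ((emod_zero_iff n _).mp hh))]
    have h3 : A 0 ≤ A m := hAmono 0 m (by omega)
    rw [h2] at h1
    linarith
  -- trajectory invariant: classes other than 0 never sit on the second entry
  have hinv : ∀ c : ℤ, ¬ (n:ℤ) ∣ (c - A m) → ∀ j i : ℕ, i + j = m →
      ¬ (n:ℤ) ∣ (suffixProd l i c - A i) := by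
    intro c hc j
    induction j with
    | zero =>
      intro i hi
      have : i = m := by omega
      subst this
      rw [hmdef, suffixProd_len]
      exact hc
    | succ j ih =>
      intro i hi
      have hi' : i < m := by omega
      have ihh := ih (i+1) (by omega)
      rw [suffixProd_eq l i hi', hget i hi']
      simp only [Function.comp_apply]
      set y := suffixProd l (i+1) c with hy
      by_cases hcnd : (y - A i) % (n:ℤ) = 0
      · rw [affRefl_fst (A (i+1)) hcnd]
        intro hdd
        rw [emod_zero_iff] at hcnd
        apply hgap i hi'
        have e : A (i+1) - A i = (y - A i + A (i+1) - A i) - (y - A i) := by ring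
        rw [e]
        exact dvd_sub hdd hcnd
      · have h2 : (y - A (i+1)) % (n:ℤ) ≠ 0 := fun hh => ihh ((emod_zero_iff n _).mp hh)
        rw [affRefl_none hcnd h2]
        exact fun hh => hcnd ((emod_zero_iff n _).mpr hh)
  -- step formula
  have hstep : ∀ c : ℤ, ¬ (n:ℤ) ∣ (c - A m) → ∀ i : ℕ, i < m →
      suffixProd l i c = suffixProd l (i+1) c +
        (if (suffixProd l (i+1) c - A i) % (n:ℤ) = 0 then A (i+1) - A i else 0) := by
    intro c hc i hi
    have ihh := hinv c hc (m - (i+1)) (i+1) (by omega)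
    rw [suffixProd_eq l i hi, hget i hi]
    simp only [Function.comp_apply]
    set y := suffixProd l (i+1) c with hy
    by_cases hcnd : (y - A i) % (n:ℤ) = 0
    · rw [if_pos hcnd, affRefl_fst (A (i+1)) hcnd]
      ring
    · have h2 : (y - A (i+1)) % (n:ℤ) ≠ 0 := fun hh => ihh ((emod_zero_iff n _).mp hh)
      rw [if_neg hcnd, affRefl_none hcnd h2]
      ring
  -- the increase condition
  have hcond : ∀ c : ℤ, ¬ (n:ℤ) ∣ (c - A m) → ∀ i : ℕ, i < m →
      (suffixProd l (i+1) c < suffixProd l i c ↔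
        (suffixProd l (i+1) c - A i) % (n:ℤ) = 0) := by
    intro c hc i hi
    rw [hstep c hc i hi]
    by_cases hcnd : (suffixProd l (i+1) c - A i) % (n:ℤ) = 0
    · rw [if_pos hcnd]
      have := hAlt i
      constructor
      · intro _; exact hcnd
      · intro _; linarith
    · rw [if_neg hcnd]
      simp [hcnd]
  -- class membership of starting points
  have hcAm : ∀ c : ℤ, 1 ≤ c → c < (n:ℤ) → ¬ (n:ℤ) ∣ (c - A m) := by
    intro c h1 h2 hdvd
    have : (n:ℤ) ∣ c := by
      have e : c = (c - A m) + A m := by ring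
      rw [e]
      exact dvd_add hdvd hAm
    have := Int.le_of_dvd (by linarith) this
    linarith
  -- telescoping: sum of increments is n
  have htel : ∀ c : ℤ, ∑ i ∈ Finset.range m, (suffixProd l i c - suffixProd l (i+1) c)
      = suffixProd l 0 c - suffixProd l m c :=
    fun c => Finset.sum_range_sub' (fun i => suffixProd l i c) m
  -- each class increases at least twice
  have hT2 : ∀ c : ℤ, 1 ≤ c → c < (n:ℤ) →
      2 ≤ ((Finset.range m).filter
        (fun i => (suffixProd l (i+1) c - A i) % (n:ℤ) = 0)).card := by
    intro c h1 h2
    have hc := hcAm c h1 h2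
    set s := (Finset.range m).filter
        (fun i => (suffixProd l (i+1) c - A i) % (n:ℤ) = 0) with hs
    have hsum : ∑ i ∈ s, (A (i+1) - A i) = (n:ℤ) := by
      have e1 : ∑ i ∈ s, (A (i+1) - A i)
          = ∑ i ∈ Finset.range m, (suffixProd l i c - suffixProd l (i+1) c) := by
        rw [hs, Finset.sum_filter]
        apply Finset.sum_congr rfl
        intro i hi
        have hi' : i < m := Finset.mem_range.mp hi
        rw [hstep c hc i hi']
        split_ifs with hcnd <;> ring
      have e2 : suffixProd l 0 c = lam n c := by
        unfold suffixProd
        rw [List.drop_zero, hprod]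
      have e3 : suffixProd l m c = c := by
        rw [hmdef, suffixProd_len]
        rfl
      have e4 : lam n c = c + n := by
        unfold lam
        rw [if_neg]
        intro hh
        rw [emod_zero_iff] at hh
        have := Int.le_of_dvd (by linarith) hh
        linarith
      rw [e1, htel, e2, e3, e4]
      ring
    by_contra hlt
    push_neg at hlt
    interval_cases hcard : s.card
    · rw [Finset.card_eq_zero] at hcard
      rw [hcard] at hsum
      simp at hsum
      linarith
    · rw [Finset.card_eq_one] at hcard
      obtain ⟨i0, hi0⟩ := hcard
      have hi0m : i0 < m := by
        have : i0 ∈ s := by rw [hi0]; exact Finset.mem_singleton_self i0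
        exact Finset.mem_range.mp (Finset.mem_filter.mp this).1
      rw [hi0, Finset.sum_singleton] at hsum
      exact hgap i0 hi0m (hsum ▸ dvd_refl (n:ℤ))
  -- each step increases exactly one class in [1, n)
  have huniq : ∀ i : ℕ, i < m →
      ((Finset.Ico (1:ℤ) (n:ℤ)).filter
        (fun c => (suffixProd l (i+1) c - A i) % (n:ℤ) = 0)).card = 1 := by
    intro i hi
    set L := l.drop (i+1) with hL
    have hLmem : ∀ t ∈ L, IsAffRefl n t := fun t ht => hrefl t (List.mem_of_mem_drop ht)
    have hu : suffixProd l (i+1) = listProd L := rfl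
    set v := listProd L.reverse with hv
    set y := v (A i) with hyy
    have huv : listProd L y = A i := listProd_inv_reverse hLmem (A i)
    have huAm : listProd L (A m) = A (i+1) := by
      rw [← hu]
      exact hzero (m - (i+1)) (i+1) (by omega)
    have hy0 : ¬ (n:ℤ) ∣ (y - A m) := by
      intro hd
      apply hgap i hi
      have := listProd_pres hLmem hd
      rw [huv, huAm] at this
      have e : A (i+1) - A i = -(A i - A (i+1)) := by ring
      rw [e]
      exact dvd_neg.mpr this
    set k0 := y % (n:ℤ) with hk0
    have hk0n : 0 ≤ k0 ∧ k0 < n := ⟨Int.emod_nonneg y (by linarith), Int.emod_lt_of_pos y hn0⟩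
    have hk0pos : 1 ≤ k0 := by
      rcases lt_or_ge 0 k0 with h | h
      · linarith
      · exfalso
        have hz : k0 = 0 := le_antisymm h hk0n.1
        have : (n:ℤ) ∣ y := by
          rw [← emod_zero_iff]; exact hz
        apply hy0
        exact dvd_sub this hAm
    have hk0y : (n:ℤ) ∣ (k0 - y) := by
      have e : k0 - y = -((n:ℤ) * (y / (n:ℤ))) := by
        rw [hk0, Int.emod_def]; ring
      rw [e]
      exact dvd_neg.mpr (Dvd.intro _ rfl)
    have hk0cond : (suffixProd l (i+1) k0 - A i) % (n:ℤ) = 0 := by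
      rw [emod_zero_iff, hu]
      have := listProd_pres hLmem hk0y
      rw [huv] at this
      exact this
    rw [Finset.card_eq_one]
    refine ⟨k0, ?_⟩
    apply Finset.eq_singleton_iff_unique_mem.mpr
    constructor
    · exact Finset.mem_filter.mpr ⟨Finset.mem_Ico.mpr ⟨hk0pos, hk0n.2⟩, hk0cond⟩
    · intro c hcmem
      obtain ⟨hcI, hcc⟩ := Finset.mem_filter.mp hcmem
      obtain ⟨hc1, hc2⟩ := Finset.mem_Ico.mp hcI
      rw [emod_zero_iff] at hcc hk0cond
      rw [hu] at hcc hk0cond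
      have hd : (n:ℤ) ∣ (listProd L c - listProd L k0) := by
        have e : listProd L c - listProd L k0
            = (listProd L c - A i) - (listProd L k0 - A i) := by ring
        rw [e]
        exact dvd_sub hcc hk0cond
      have hd2 : (n:ℤ) ∣ (c - k0) := by
        have := listProd_pres (L := L.reverse)
          (fun t ht => hLmem t (List.mem_reverse.mp ht)) hd
        rw [listProd_reverse_inv hLmem, listProd_reverse_inv hLmem] at this
        exact this
      have : c - k0 = 0 := by
        apply Int.eq_zero_of_abs_lt_dvd hd2
        rw [abs_lt]
        constructor <;> linarith
      linarith
  -- double counting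
  set T : ℤ → ℕ := fun c => ((Finset.range m).filter
      (fun i => (suffixProd l (i+1) c - A i) % (n:ℤ) = 0)).card with hT
  have hsumT : ∑ c ∈ Finset.Ico (1:ℤ) (n:ℤ), T c = m := by
    have e1 : ∀ c : ℤ, T c = ∑ i ∈ Finset.range m,
        (if (suffixProd l (i+1) c - A i) % (n:ℤ) = 0 then 1 else 0) := by
      intro c
      rw [hT]
      exact Finset.card_filter _ _
    calc ∑ c ∈ Finset.Ico (1:ℤ) (n:ℤ), T c
        = ∑ c ∈ Finset.Ico (1:ℤ) (n:ℤ), ∑ i ∈ Finset.range m,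
            (if (suffixProd l (i+1) c - A i) % (n:ℤ) = 0 then 1 else 0) :=
          Finset.sum_congr rfl (fun c _ => e1 c)
      _ = ∑ i ∈ Finset.range m, ∑ c ∈ Finset.Ico (1:ℤ) (n:ℤ),
            (if (suffixProd l (i+1) c - A i) % (n:ℤ) = 0 then 1 else 0) := Finset.sum_comm
      _ = ∑ i ∈ Finset.range m, 1 := by
          apply Finset.sum_congr rfl
          intro i hi
          rw [← Finset.card_filter]
          exact huniq i (Finset.mem_range.mp hi)
      _ = m := by simp
  have hIcard : (Finset.Ico (1:ℤ) (n:ℤ)).card = n - 1 := by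
    rw [Int.card_Ico]
    omega
  have hkIco : k ∈ Finset.Ico (1:ℤ) (n:ℤ) := Finset.mem_Ico.mpr ⟨hk1, by linarith⟩
  have hTk : T k = 2 := by
    by_contra hne
    have h3 : 3 ≤ T k := by
      have h4 : 2 ≤ T k := hT2 k hk1 (by linarith)
      omega
    have hbound : ∑ _c ∈ (Finset.Ico (1:ℤ) (n:ℤ)).erase k, 2 ≤
        ∑ c ∈ (Finset.Ico (1:ℤ) (n:ℤ)).erase k, T c := by
      apply Finset.sum_le_sum
      intro c hc
      obtain ⟨h1', h2'⟩ := Finset.mem_Ico.mp (Finset.mem_of_mem_erase hc)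
      exact hT2 c h1' h2'
    have hsplit : T k + ∑ c ∈ (Finset.Ico (1:ℤ) (n:ℤ)).erase k, T c = m := by
      rw [← hsumT]
      exact Finset.add_sum_erase _ T hkIco
    have hec : ((Finset.Ico (1:ℤ) (n:ℤ)).erase k).card = n - 2 := by
      rw [Finset.card_erase_of_mem hkIco, hIcard]
      omega
    have hconst : ∑ _c ∈ (Finset.Ico (1:ℤ) (n:ℤ)).erase k, (2:ℕ)
        = ((Finset.Ico (1:ℤ) (n:ℤ)).erase k).card * 2 := by
      rw [Finset.sum_const, smul_eq_mul]
    rw [hconst, hec] at hbound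
    omega
  have hfe : (Finset.range m).filter
      (fun i => suffixProd l (i + 1) k < suffixProd l i k)
      = (Finset.range m).filter
        (fun i => (suffixProd l (i+1) k - A i) % (n:ℤ) = 0) := by
    apply Finset.filter_congr
    intro i hi
    have hi' : i < m := Finset.mem_range.mp hi
    exact hcond k (hcAm k hk1 (by linarith)) i hi'
  rw [hfe]
  exact hTk
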